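/- The divergence operator from the space x·ℙ_{k−2}(E) := {x q(x) : q ∈ ℙ_{k−2}} (vector fields of the form (x₁q, x₂q) with q a polynomial of degree ≤ k−2 in two variables) onto ℙ_{k−2}(E) is surjective for k ≥ 2. -/
import Mathlib

open MvPolynomial

lemma X_mul_pderiv_monomial (i : Fin 2) (m : Fin 2 →₀ ℕ) (c : ℝ) :
    X i * pderiv i (monomial m c) = monomial m ((m i : ℝ) * c) := by
  rw [pderiv_monomial]
  rcases Nat.eq_zero_or_pos (m i) with h | h
  · simp [h]
  · have hm : Finsupp.single i 1 + (m - Finsupp.single i 1) = m := by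
      ext j
      rcases eq_or_ne j i with rfl | hj
      · simp [Finsupp.single_apply]; omega
      · simp [Finsupp.single_apply, Ne.symm hj]
    rw [X, monomial_mul, one_mul, mul_comm c, hm]

lemma div_monomial (m : Fin 2 →₀ ℕ) (c : ℝ) :
    pderiv (0 : Fin 2) (X 0 * monomial m c) + pderiv (1 : Fin 2) (X 1 * monomial m c)
      = monomial m (((m 0 : ℝ) + (m 1 : ℝ) + 2) * c) := by
  rw [pderiv_mul, pderiv_mul, pderiv_X_self, pderiv_X_self,
    X_mul_pderiv_monomial, X_mul_pderiv_monomial]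
  rw [one_mul, ← map_add, ← map_add, ← map_add]
  congr 1
  ring

theorem div_x_poly_surjective (k : ℕ) (hk : 2 ≤ k)
    (p : MvPolynomial (Fin 2) ℝ) (hp : p.totalDegree ≤ k - 2) :
    ∃ q : MvPolynomial (Fin 2) ℝ, q.totalDegree ≤ k - 2 ∧
      pderiv (0 : Fin 2) (X 0 * q) + pderiv (1 : Fin 2) (X 1 * q) = p := by
  set q : MvPolynomial (Fin 2) ℝ :=
    ∑ m ∈ p.support, monomial m (p.coeff m / ((m 0 : ℝ) + (m 1 : ℝ) + 2)) with hq
  refine ⟨q, ?_, ?_⟩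
  · refine le_trans (totalDegree_finset_sum _ _) ?_
    refine Finset.sup_le fun m hm => ?_
    refine le_trans (totalDegree_monomial_le _ _) ?_
    exact le_trans (le_totalDegree hm) hp
  · rw [hq, Finset.mul_sum, Finset.mul_sum, map_sum, map_sum, ← Finset.sum_add_distrib]
    conv_rhs => rw [p.as_sum]
    refine Finset.sum_congr rfl fun m hm => ?_
    rw [div_monomial]
    congr 1
    have h2 : ((m 0 : ℝ) + (m 1 : ℝ) + 2) ≠ 0 := by positivity
    field_simp
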